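/- If D is stable, then there is a constant k > 0 such that for all h ∈ BU and x^h ∈ BU satisfying Dx^h_s = h(s) for every s ≤ 0, one has ‖x^h‖_∞ ≤ k‖h‖_∞. -/

import Mathlib

open MeasureTheory Filter Set

/-- `x` is bounded and uniformly continuous on `(-∞,0]` (membership in `BU`,
where only the restriction of `x` to `(-∞,0]` is relevant). -/
def IsBU (m : ℕ) (x : ℝ → Fin m → ℝ) : Prop :=
  (∃ C : ℝ, ∀ s : ℝ, s ≤ 0 → ‖x s‖ ≤ C) ∧
  ∀ ε > (0:ℝ), ∃ δ > (0:ℝ), ∀ s : ℝ, s ≤ 0 → ∀ s' : ℝ, s' ≤ 0 →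
    |s - s'| < δ → ‖x s - x s'‖ < ε

/-- the supremum norm `‖x‖_∞ = sup_{s ≤ 0} ‖x(s)‖`. -/
noncomputable def supNorm (m : ℕ) (x : ℝ → Fin m → ℝ) : ℝ :=
  ⨆ s : Set.Iic (0:ℝ), ‖x (s : ℝ)‖

/-- time shift: `shift m x t = x_t`, where `x_t(s) = x(t+s)`. -/
def shift (m : ℕ) (x : ℝ → Fin m → ℝ) (t : ℝ) : ℝ → Fin m → ℝ :=
  fun s => x (t + s)

/-- The operator `Dx = x(0) - ∫_{-∞}^0 [dν(s)] x(s)`, where the matrix of real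
(signed) Borel measures `ν` is given through a positive part `νp` and a
negative part `νn` (Jordan decomposition), i.e. `ν i j = νp i j - νn i j`. -/
noncomputable def Dop (m : ℕ) (νp νn : Fin m → Fin m → Measure ℝ)
    (x : ℝ → Fin m → ℝ) : Fin m → ℝ :=
  fun i => x 0 i - ∑ j : Fin m,
    ((∫ s in Set.Iic (0:ℝ), x s j ∂(νp i j)) - ∫ s in Set.Iic (0:ℝ), x s j ∂(νn i j))

/-- the measures `ν_ij` have finite total variation and `|ν_ij|({0}) = 0`. -/
def NuCond (m : ℕ) (νp νn : Fin m → Fin m → Measure ℝ) : Prop :=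
  (∀ i j, νp i j Set.univ ≠ ⊤) ∧ (∀ i j, νn i j Set.univ ≠ ⊤) ∧
  (∀ i j, νp i j {0} = 0) ∧ (∀ i j, νn i j {0} = 0)

/-- `D` is stable: there is a continuous `c : [0,∞) → [0,∞)` with `c(t) → 0`
as `t → ∞` such that every continuous `x : ℝ → ℝ^m` with `x_0 ∈ BU` and
`D x_t = 0` for all `t ≥ 0` satisfies `‖x(t)‖ ≤ c(t) ‖x_0‖_∞` for all `t ≥ 0`. -/
def IsStableOp (m : ℕ) (D : (ℝ → Fin m → ℝ) → Fin m → ℝ) : Prop :=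
  ∃ c : ℝ → ℝ, ContinuousOn c (Set.Ici 0) ∧ (∀ t : ℝ, 0 ≤ t → 0 ≤ c t) ∧
    Filter.Tendsto c Filter.atTop (nhds 0) ∧
    ∀ x : ℝ → Fin m → ℝ, Continuous x → IsBU m x →
      (∀ t : ℝ, 0 ≤ t → D (shift m x t) = 0) →
      ∀ t : ℝ, 0 ≤ t → ‖x t‖ ≤ c t * supNorm m x

/-- the convolution operator `D̂`, `(D̂x)(s) = D x_s`. -/
noncomputable def Dhat (m : ℕ) (νp νn : Fin m → Fin m → Measure ℝ)
    (x : ℝ → Fin m → ℝ) : ℝ → Fin m → ℝ :=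
  fun s => Dop m νp νn (shift m x s)

/-- the seminorm `‖x‖_n = sup_{s ∈ [-n,0]} ‖x(s)‖`. -/
noncomputable def normOn (m : ℕ) (n : ℕ) (x : ℝ → Fin m → ℝ) : ℝ :=
  ⨆ s : Set.Icc (-(n:ℝ)) 0, ‖x (s : ℝ)‖

/-- the compact-open metric
`d(x,y) = ∑_{n ≥ 1} 2⁻ⁿ ‖x-y‖_n / (1 + ‖x-y‖_n)`. -/
noncomputable def coDist (m : ℕ) (x y : ℝ → Fin m → ℝ) : ℝ :=
  ∑' n : ℕ, (1/2 : ℝ)^(n+1) *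
    (normOn m (n+1) (fun s => x s - y s)) / (1 + normOn m (n+1) (fun s => x s - y s))

/-- `sup_{0 ≤ u ≤ t} ‖h(u)‖`. -/
noncomputable def supOn (m : ℕ) (h : ℝ → Fin m → ℝ) (t : ℝ) : ℝ :=
  ⨆ u : Set.Icc (0:ℝ) t, ‖h (u : ℝ)‖

/-- the order `x ≤_D y`, i.e. `D x_s ≤ D y_s` (componentwise) for all `s ≤ 0`. -/
def leD (m : ℕ) (νp νn : Fin m → Fin m → Measure ℝ) (x y : ℝ → Fin m → ℝ) : Prop :=
  ∀ s : ℝ, s ≤ 0 → ∀ i, Dhat m νp νn x s i ≤ Dhat m νp νn y s i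

open scoped NNReal

namespace St5
variable {m : ℕ} (νp νn : Fin m → Fin m → Measure ℝ)

noncomputable def Lf (x : ℝ → Fin m → ℝ) : Fin m → ℝ :=
  fun i => ∑ j, ((∫ s in Iic (0:ℝ), x s j ∂(νp i j)) - ∫ s in Iic (0:ℝ), x s j ∂(νn i j))

lemma Dop_eq (x : ℝ → Fin m → ℝ) : Dop m νp νn x = fun i => x 0 i - Lf νp νn x i := rfl

noncomputable def Vtot : ℝ :=
  ∑ i : Fin m, ∑ j : Fin m, ((νp i j (Iic 0)).toReal + (νn i j (Iic 0)).toReal)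

noncomputable def rhom (δ : ℝ) : ℝ :=
  ∑ i : Fin m, ∑ j : Fin m, ((νp i j (Ioc (-δ) 0)).toReal + (νn i j (Ioc (-δ) 0)).toReal)

lemma fin_restrict (μ : Measure ℝ) (h : μ univ ≠ ⊤) (s : Set ℝ) :
    IsFiniteMeasure (μ.restrict s) := by
  constructor
  rw [Measure.restrict_apply_univ]
  exact lt_of_le_of_lt (measure_mono (subset_univ _)) (lt_top_iff_ne_top.2 h)

lemma abs_setIntegral_le (μ : Measure ℝ) (hμ : μ univ ≠ ⊤) {f : ℝ → ℝ} {B : ℝ}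
    (hf : ∀ s ∈ Iic (0:ℝ), |f s| ≤ B) :
    |∫ s in Iic (0:ℝ), f s ∂μ| ≤ B * (μ (Iic 0)).toReal := by
  haveI := fin_restrict μ hμ (Iic 0)
  have h1 : ∀ᵐ s ∂(μ.restrict (Iic 0)), ‖f s‖ ≤ B := by
    rw [ae_restrict_iff' measurableSet_Iic]
    filter_upwards with s hs
    simpa [Real.norm_eq_abs] using hf s hs
  simpa [Real.norm_eq_abs, Measure.restrict_apply_univ, Measure.real] using
    norm_integral_le_of_norm_le_const (μ := μ.restrict (Iic 0)) h1

lemma abs_setIntegral_split (μ : Measure ℝ) (hμ : μ univ ≠ ⊤) {f : ℝ → ℝ} {δ B1 B2 : ℝ}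
    (hδ : 0 < δ) (hint : IntegrableOn f (Iic 0) μ)
    (h1 : ∀ s ∈ Ioc (-δ) (0:ℝ), |f s| ≤ B1) (h2 : ∀ s ∈ Iic (-δ), |f s| ≤ B2) :
    |∫ s in Iic (0:ℝ), f s ∂μ| ≤ B1 * (μ (Ioc (-δ) 0)).toReal + B2 * (μ (Iic 0)).toReal := by
  haveI := fin_restrict μ hμ (Iic (-δ))
  haveI := fin_restrict μ hμ (Ioc (-δ) 0)
  have hun : Iic (-δ) ∪ Ioc (-δ) (0:ℝ) = Iic 0 := Iic_union_Ioc_eq_Iic (by linarith)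
  have hdisj : Disjoint (Iic (-δ)) (Ioc (-δ) (0:ℝ)) := Iic_disjoint_Ioc le_rfl
  rw [show (Iic (0:ℝ)) = Iic (-δ) ∪ Ioc (-δ) 0 from hun.symm, setIntegral_union hdisj measurableSet_Ioc
    (hint.mono_set (by rw [← hun]; exact subset_union_left))
    (hint.mono_set (by rw [← hun]; exact subset_union_right))]
  have e1 : |∫ s in Iic (-δ), f s ∂μ| ≤ B2 * (μ (Iic (-δ))).toReal := by
    have : ∀ᵐ s ∂(μ.restrict (Iic (-δ))), ‖f s‖ ≤ B2 := by
      rw [ae_restrict_iff' measurableSet_Iic]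
      filter_upwards with s hs
      simpa [Real.norm_eq_abs] using h2 s hs
    simpa [Real.norm_eq_abs, Measure.restrict_apply_univ, Measure.real] using
      norm_integral_le_of_norm_le_const (μ := μ.restrict (Iic (-δ))) this
  have e2 : |∫ s in Ioc (-δ) 0, f s ∂μ| ≤ B1 * (μ (Ioc (-δ) 0)).toReal := by
    have : ∀ᵐ s ∂(μ.restrict (Ioc (-δ) 0)), ‖f s‖ ≤ B1 := by
      rw [ae_restrict_iff' measurableSet_Ioc]
      filter_upwards with s hs
      simpa [Real.norm_eq_abs] using h1 s hs
    simpa [Real.norm_eq_abs, Measure.restrict_apply_univ, Measure.real] using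
      norm_integral_le_of_norm_le_const (μ := μ.restrict (Ioc (-δ) 0)) this
  have e3 : B2 * (μ (Iic (-δ))).toReal ≤ B2 * (μ (Iic 0)).toReal := by
    rcases le_or_gt 0 B2 with h | h
    · apply mul_le_mul_of_nonneg_left _ h
      apply ENNReal.toReal_le_toReal (ne_top_of_le_ne_top hμ (measure_mono (subset_univ _)))
        (ne_top_of_le_ne_top hμ (measure_mono (subset_univ _))) |>.mpr
      exact measure_mono (Iic_subset_Iic.2 (by linarith))
    · exfalso
      have := h2 (-δ) (mem_Iic.2 le_rfl)
      have := abs_nonneg (f (-δ)); linarith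
  calc |∫ s in Iic (-δ), f s ∂μ + ∫ s in Ioc (-δ) 0, f s ∂μ|
      ≤ |∫ s in Iic (-δ), f s ∂μ| + |∫ s in Ioc (-δ) 0, f s ∂μ| := abs_add_le _ _
    _ ≤ B1 * (μ (Ioc (-δ) 0)).toReal + B2 * (μ (Iic 0)).toReal := by
        have := e1.trans e3; linarith
    _ = B1 * (μ (Ioc (-δ) 0)).toReal + B2 * (μ (Iic (-δ) ∪ Ioc (-δ) 0)).toReal := by rw [hun]


lemma Vtot_nonneg : 0 ≤ Vtot νp νn := by
  apply Finset.sum_nonneg; intro i _; apply Finset.sum_nonneg; intro j _; positivity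

lemma rhom_nonneg (δ : ℝ) : 0 ≤ rhom νp νn δ := by
  apply Finset.sum_nonneg; intro i _; apply Finset.sum_nonneg; intro j _; positivity

def IntOnNu (y : ℝ → Fin m → ℝ) : Prop :=
  ∀ i j, IntegrableOn (fun s => y s j) (Iic 0) (νp i j) ∧
    IntegrableOn (fun s => y s j) (Iic 0) (νn i j)

lemma intOnNu_of (hfp : ∀ i j, νp i j univ ≠ ⊤) (hfn : ∀ i j, νn i j univ ≠ ⊤)
    {y : ℝ → Fin m → ℝ} {B : ℝ} (hc : ∀ j, ContinuousOn (fun s => y s j) (Iic 0))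
    (hB : ∀ s ≤ (0:ℝ), ‖y s‖ ≤ B) : IntOnNu νp νn y := by
  have key : ∀ (μ : Measure ℝ), μ univ ≠ ⊤ → ∀ j, IntegrableOn (fun s => y s j) (Iic 0) μ := by
    intro μ hμ j
    haveI := fin_restrict μ hμ (Iic 0)
    refine Integrable.mono' (integrable_const B) ((hc j).aestronglyMeasurable measurableSet_Iic) ?_
    rw [ae_restrict_iff' measurableSet_Iic]
    filter_upwards with s hs
    calc ‖y s j‖ ≤ ‖y s‖ := norm_le_pi_norm (y s) j
      _ ≤ B := hB s hs
  exact fun i j => ⟨key _ (hfp i j) j, key _ (hfn i j) j⟩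

lemma lf_norm_le (hfp : ∀ i j, νp i j univ ≠ ⊤) (hfn : ∀ i j, νn i j univ ≠ ⊤)
    {y : ℝ → Fin m → ℝ} {B : ℝ} (hB : 0 ≤ B) (h : ∀ s ≤ (0:ℝ), ‖y s‖ ≤ B) :
    ‖Lf νp νn y‖ ≤ Vtot νp νn * B := by
  have hVB : 0 ≤ Vtot νp νn * B := mul_nonneg (Vtot_nonneg νp νn) hB
  rw [pi_norm_le_iff_of_nonneg hVB]
  intro i
  have hb : ∀ j : Fin m, |(∫ s in Iic (0:ℝ), y s j ∂(νp i j)) - ∫ s in Iic (0:ℝ), y s j ∂(νn i j)|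
      ≤ ((νp i j (Iic 0)).toReal + (νn i j (Iic 0)).toReal) * B := by
    intro j
    have hyb : ∀ s ∈ Iic (0:ℝ), |y s j| ≤ B := by
      intro s hs
      calc |y s j| = ‖y s j‖ := (Real.norm_eq_abs _).symm
        _ ≤ ‖y s‖ := norm_le_pi_norm (y s) j
        _ ≤ B := h s hs
    have h1 := abs_setIntegral_le (νp i j) (hfp i j) hyb
    have h2 := abs_setIntegral_le (νn i j) (hfn i j) hyb
    calc |(∫ s in Iic (0:ℝ), y s j ∂(νp i j)) - ∫ s in Iic (0:ℝ), y s j ∂(νn i j)|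
        ≤ |∫ s in Iic (0:ℝ), y s j ∂(νp i j)| + |∫ s in Iic (0:ℝ), y s j ∂(νn i j)| :=
          abs_sub _ _
      _ ≤ ((νp i j (Iic 0)).toReal + (νn i j (Iic 0)).toReal) * B := by
          rw [add_mul, mul_comm ((νp i j (Iic 0)).toReal) B,
            mul_comm ((νn i j (Iic 0)).toReal) B]
          exact add_le_add h1 h2
  calc ‖Lf νp νn y i‖
      ≤ ∑ j, ((νp i j (Iic 0)).toReal + (νn i j (Iic 0)).toReal) * B := by
        rw [Real.norm_eq_abs]
        exact (Finset.abs_sum_le_sum_abs _ _).trans (Finset.sum_le_sum fun j _ => hb j)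
    _ = (∑ j, ((νp i j (Iic 0)).toReal + (νn i j (Iic 0)).toReal)) * B := by
        rw [Finset.sum_mul]
    _ ≤ Vtot νp νn * B := by
        apply mul_le_mul_of_nonneg_right _ hB
        exact Finset.single_le_sum (f := fun i => ∑ j, ((νp i j (Iic 0)).toReal
          + (νn i j (Iic 0)).toReal))
          (fun i _ => Finset.sum_nonneg fun j _ => by positivity) (Finset.mem_univ i)


lemma lf_split (hfp : ∀ i j, νp i j univ ≠ ⊤) (hfn : ∀ i j, νn i j univ ≠ ⊤)
    {y : ℝ → Fin m → ℝ} {δ B1 B2 : ℝ} (hδ : 0 < δ) (hB1 : 0 ≤ B1) (hB2 : 0 ≤ B2)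
    (hint : IntOnNu νp νn y)
    (hb1 : ∀ s ∈ Ioc (-δ) (0:ℝ), ‖y s‖ ≤ B1) (hb2 : ∀ s ∈ Iic (-δ), ‖y s‖ ≤ B2) :
    ‖Lf νp νn y‖ ≤ rhom νp νn δ * B1 + Vtot νp νn * B2 := by
  have hrhs : 0 ≤ rhom νp νn δ * B1 + Vtot νp νn * B2 :=
    add_nonneg (mul_nonneg (rhom_nonneg νp νn δ) hB1) (mul_nonneg (Vtot_nonneg νp νn) hB2)
  rw [pi_norm_le_iff_of_nonneg hrhs]
  intro i
  have habs1 : ∀ j, ∀ s ∈ Ioc (-δ) (0:ℝ), |y s j| ≤ B1 := by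
    intro j s hs
    calc |y s j| = ‖y s j‖ := (Real.norm_eq_abs _).symm
      _ ≤ ‖y s‖ := norm_le_pi_norm (y s) j
      _ ≤ B1 := hb1 s hs
  have habs2 : ∀ j, ∀ s ∈ Iic (-δ), |y s j| ≤ B2 := by
    intro j s hs
    calc |y s j| = ‖y s j‖ := (Real.norm_eq_abs _).symm
      _ ≤ ‖y s‖ := norm_le_pi_norm (y s) j
      _ ≤ B2 := hb2 s hs
  have hb : ∀ j : Fin m,
      |(∫ s in Iic (0:ℝ), y s j ∂(νp i j)) - ∫ s in Iic (0:ℝ), y s j ∂(νn i j)|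
      ≤ ((νp i j (Ioc (-δ) 0)).toReal + (νn i j (Ioc (-δ) 0)).toReal) * B1
        + ((νp i j (Iic 0)).toReal + (νn i j (Iic 0)).toReal) * B2 := by
    intro j
    have h1 := abs_setIntegral_split (νp i j) (hfp i j) hδ (hint i j).1 (habs1 j) (habs2 j)
    have h2 := abs_setIntegral_split (νn i j) (hfn i j) hδ (hint i j).2 (habs1 j) (habs2 j)
    have := abs_sub (∫ s in Iic (0:ℝ), y s j ∂(νp i j)) (∫ s in Iic (0:ℝ), y s j ∂(νn i j))
    nlinarith [this, h1, h2]
  calc ‖Lf νp νn y i‖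
      ≤ ∑ j, (((νp i j (Ioc (-δ) 0)).toReal + (νn i j (Ioc (-δ) 0)).toReal) * B1
        + ((νp i j (Iic 0)).toReal + (νn i j (Iic 0)).toReal) * B2) := by
        rw [Real.norm_eq_abs]
        exact (Finset.abs_sum_le_sum_abs _ _).trans (Finset.sum_le_sum fun j _ => hb j)
    _ = (∑ j, ((νp i j (Ioc (-δ) 0)).toReal + (νn i j (Ioc (-δ) 0)).toReal)) * B1
        + (∑ j, ((νp i j (Iic 0)).toReal + (νn i j (Iic 0)).toReal)) * B2 := by
        rw [Finset.sum_add_distrib, Finset.sum_mul, Finset.sum_mul]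
    _ ≤ rhom νp νn δ * B1 + Vtot νp νn * B2 := by
        have e1 : (∑ j, ((νp i j (Ioc (-δ) 0)).toReal + (νn i j (Ioc (-δ) 0)).toReal))
            ≤ rhom νp νn δ :=
          Finset.single_le_sum (f := fun i => ∑ j, ((νp i j (Ioc (-δ) 0)).toReal
            + (νn i j (Ioc (-δ) 0)).toReal))
            (fun i _ => Finset.sum_nonneg fun j _ => by positivity) (Finset.mem_univ i)
        have e2 : (∑ j, ((νp i j (Iic 0)).toReal + (νn i j (Iic 0)).toReal))
            ≤ Vtot νp νn :=
          Finset.single_le_sum (f := fun i => ∑ j, ((νp i j (Iic 0)).toReal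
            + (νn i j (Iic 0)).toReal))
            (fun i _ => Finset.sum_nonneg fun j _ => by positivity) (Finset.mem_univ i)
        exact add_le_add (mul_le_mul_of_nonneg_right e1 hB1) (mul_le_mul_of_nonneg_right e2 hB2)

lemma lf_congr {y y' : ℝ → Fin m → ℝ} (h : EqOn y y' (Iic 0)) :
    Lf νp νn y = Lf νp νn y' := by
  funext i
  unfold Lf
  refine Finset.sum_congr rfl fun j _ => ?_
  have e : ∀ (μ : Measure ℝ), (∫ s in Iic (0:ℝ), y s j ∂μ) = ∫ s in Iic (0:ℝ), y' s j ∂μ := by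
    intro μ
    exact setIntegral_congr_fun measurableSet_Iic (fun s hs => by
      show y s j = y' s j; rw [h hs])
  rw [e, e]

lemma lf_zero_of (y : ℝ → Fin m → ℝ) (h : ∀ s ≤ (0:ℝ), y s = 0) : Lf νp νn y = 0 := by
  have : Lf νp νn y = Lf νp νn (fun _ => 0) := lf_congr νp νn (fun s hs => h s hs)
  rw [this]
  funext i
  simp [Lf]

lemma lf_sub {y y' : ℝ → Fin m → ℝ} (h1 : IntOnNu νp νn y) (h2 : IntOnNu νp νn y') :
    Lf νp νn (fun s => y s - y' s) = fun i => Lf νp νn y i - Lf νp νn y' i := by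
  funext i
  unfold Lf
  have : ∀ j : Fin m,
      ((∫ s in Iic (0:ℝ), (y s - y' s) j ∂(νp i j)) - ∫ s in Iic (0:ℝ), (y s - y' s) j ∂(νn i j))
      = ((∫ s in Iic (0:ℝ), y s j ∂(νp i j)) - ∫ s in Iic (0:ℝ), y s j ∂(νn i j))
        - ((∫ s in Iic (0:ℝ), y' s j ∂(νp i j)) - ∫ s in Iic (0:ℝ), y' s j ∂(νn i j)) := by
    intro j
    have ep : (∫ s in Iic (0:ℝ), (y s - y' s) j ∂(νp i j))
        = (∫ s in Iic (0:ℝ), y s j ∂(νp i j)) - ∫ s in Iic (0:ℝ), y' s j ∂(νp i j) := by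
      simp only [Pi.sub_apply]
      exact integral_sub (h1 i j).1 (h2 i j).1
    have en : (∫ s in Iic (0:ℝ), (y s - y' s) j ∂(νn i j))
        = (∫ s in Iic (0:ℝ), y s j ∂(νn i j)) - ∫ s in Iic (0:ℝ), y' s j ∂(νn i j) := by
      simp only [Pi.sub_apply]
      exact integral_sub (h1 i j).2 (h2 i j).2
    rw [ep, en]; ring
  rw [Finset.sum_congr rfl fun j _ => this j, Finset.sum_sub_distrib]

lemma lf_cont (hfp : ∀ i j, νp i j univ ≠ ⊤) (hfn : ∀ i j, νn i j univ ≠ ⊤)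
    {g : ℝ → Fin m → ℝ} {B : ℝ} (hg : Continuous g) (hB : ∀ t, ‖g t‖ ≤ B) :
    Continuous (fun τ => Lf νp νn (shift m g τ)) := by
  apply continuous_pi
  intro i
  apply continuous_finset_sum
  intro j _
  have key : ∀ (μ : Measure ℝ), μ univ ≠ ⊤ →
      Continuous (fun τ => ∫ s in Iic (0:ℝ), g (τ + s) j ∂μ) := by
    intro μ hμ
    haveI := fin_restrict μ hμ (Iic 0)
    apply continuous_of_dominated (bound := fun _ => B)
    · intro τ
      exact (((continuous_apply j).comp hg).comp (continuous_const.add continuous_id)).aestronglyMeasurable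
    · intro τ
      filter_upwards with s
      calc ‖g (τ + s) j‖ ≤ ‖g (τ + s)‖ := norm_le_pi_norm _ j
        _ ≤ B := hB _
    · exact integrable_const B
    · filter_upwards with s
      exact ((continuous_apply j).comp hg).comp (continuous_id.add continuous_const)
  exact Continuous.sub (key _ (hfp i j)) (key _ (hfn i j))


section FP

abbrev BCF (m : ℕ) := BoundedContinuousFunction ℝ (Fin m → ℝ)

variable (hfp : ∀ i j, νp i j univ ≠ ⊤) (hfn : ∀ i j, νn i j univ ≠ ⊤)

noncomputable def graftF (p : BCF m) (a b : ℝ) (u : BCF m) : ℝ → Fin m → ℝ :=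
  fun t => if t ≤ a then p t else u (min t b) - u a + p a

lemma graft_eq_of_le (p : BCF m) (a b : ℝ) (u : BCF m) {t : ℝ} (ht : t ≤ a) :
    graftF p a b u t = p t := if_pos ht

lemma graft_cont (p : BCF m) (a b : ℝ) (hab : a ≤ b) (u : BCF m) :
    Continuous (graftF p a b u) := by
  apply Continuous.if_le p.continuous
    (((u.continuous.comp (continuous_id.min continuous_const)).sub
      continuous_const).add continuous_const) continuous_id continuous_const
  intro t ht
  have ht' : t = a := ht
  subst ht'
  simp only [Function.comp_apply, id_eq, Pi.add_apply, Pi.sub_apply]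
  rw [min_eq_left hab]
  abel

lemma graft_bound (p : BCF m) (a b : ℝ) (u : BCF m) (t : ℝ) :
    ‖graftF p a b u t‖ ≤ ‖p‖ + 2 * ‖u‖ := by
  unfold graftF
  split
  · have := p.norm_coe_le_norm t
    have : (0:ℝ) ≤ ‖u‖ := norm_nonneg _
    calc ‖p t‖ ≤ ‖p‖ := p.norm_coe_le_norm t
      _ ≤ ‖p‖ + 2 * ‖u‖ := by linarith
  · calc ‖u (min t b) - u a + p a‖ ≤ ‖u (min t b) - u a‖ + ‖p a‖ := norm_add_le _ _
      _ ≤ ‖u (min t b)‖ + ‖u a‖ + ‖p a‖ := by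
          have := norm_sub_le (u (min t b)) (u a); linarith
      _ ≤ ‖p‖ + 2 * ‖u‖ := by
          have h1 := u.norm_coe_le_norm (min t b)
          have h2 := u.norm_coe_le_norm a
          have h3 := p.norm_coe_le_norm a
          linarith

lemma graft_diff_zero (p : BCF m) (a b : ℝ) (u u' : BCF m) {t : ℝ} (ht : t ≤ a) :
    graftF p a b u t - graftF p a b u' t = 0 := by
  rw [graft_eq_of_le p a b u ht, graft_eq_of_le p a b u' ht, sub_self]

lemma graft_diff_bound (p : BCF m) (a b : ℝ) (u u' : BCF m) (t : ℝ) :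
    ‖graftF p a b u t - graftF p a b u' t‖ ≤ 2 * dist u u' := by
  unfold graftF
  split
  · simp [dist_nonneg]
  · have e : (u (min t b) - u a + p a) - (u' (min t b) - u' a + p a)
        = (u (min t b) - u' (min t b)) - (u a - u' a) := by abel
    rw [e]
    have h1 : ‖u (min t b) - u' (min t b)‖ ≤ dist u u' := by
      rw [← dist_eq_norm]; exact BoundedContinuousFunction.dist_coe_le_dist _
    have h2 : ‖u a - u' a‖ ≤ dist u u' := by
      rw [← dist_eq_norm]; exact BoundedContinuousFunction.dist_coe_le_dist _
    calc ‖(u (min t b) - u' (min t b)) - (u a - u' a)‖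
        ≤ ‖u (min t b) - u' (min t b)‖ + ‖u a - u' a‖ := norm_sub_le _ _
      _ ≤ 2 * dist u u' := by linarith

noncomputable def PsiF (p : BCF m) (a b : ℝ) (u : BCF m) : ℝ → Fin m → ℝ :=
  fun t => if t ≤ a then p t else
    p a - Lf νp νn (shift m (graftF p a b u) a)
      + Lf νp νn (shift m (graftF p a b u) (min t b))

include hfp hfn in
lemma psi_cont (p : BCF m) (a b : ℝ) (hab : a ≤ b) (u : BCF m) :
    Continuous (PsiF νp νn p a b u) := by
  have hg : Continuous (graftF p a b u) := graft_cont p a b hab u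
  have hgb : ∀ t, ‖graftF p a b u t‖ ≤ ‖p‖ + 2 * ‖u‖ := graft_bound p a b u
  have hLc : Continuous (fun τ => Lf νp νn (shift m (graftF p a b u) τ)) :=
    lf_cont νp νn hfp hfn hg hgb
  apply Continuous.if_le p.continuous
    ((continuous_const.sub continuous_const).add
      (hLc.comp (continuous_id.min continuous_const))) continuous_id continuous_const
  intro t ht
  have ht' : t = a := ht
  subst ht'
  simp only [Function.comp_apply, id_eq, Pi.add_apply, Pi.sub_apply]
  rw [min_eq_left hab]
  abel

include hfp hfn in
lemma psi_bound (p : BCF m) (a b : ℝ) (u : BCF m) (t : ℝ) :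
    ‖PsiF νp νn p a b u t‖ ≤ ‖p‖ + 2 * (Vtot νp νn * (‖p‖ + 2 * ‖u‖)) := by
  have hB : (0:ℝ) ≤ ‖p‖ + 2 * ‖u‖ := by positivity
  have hL : ∀ τ, ‖Lf νp νn (shift m (graftF p a b u) τ)‖
      ≤ Vtot νp νn * (‖p‖ + 2 * ‖u‖) := by
    intro τ
    exact lf_norm_le νp νn hfp hfn hB (fun s _ => graft_bound p a b u (τ + s))
  unfold PsiF
  split
  · have h0 : (0:ℝ) ≤ Vtot νp νn * (‖p‖ + 2 * ‖u‖) :=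
      mul_nonneg (Vtot_nonneg νp νn) hB
    calc ‖p t‖ ≤ ‖p‖ := p.norm_coe_le_norm t
      _ ≤ _ := by linarith
  · have h1 := hL a
    have h2 := hL (min t b)
    have h3 := p.norm_coe_le_norm a
    calc ‖p a - Lf νp νn (shift m (graftF p a b u) a)
          + Lf νp νn (shift m (graftF p a b u) (min t b))‖
        ≤ ‖p a - Lf νp νn (shift m (graftF p a b u) a)‖
          + ‖Lf νp νn (shift m (graftF p a b u) (min t b))‖ := norm_add_le _ _
      _ ≤ ‖p a‖ + ‖Lf νp νn (shift m (graftF p a b u) a)‖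
          + ‖Lf νp νn (shift m (graftF p a b u) (min t b))‖ := by
          have := norm_sub_le (p a) (Lf νp νn (shift m (graftF p a b u) a)); linarith
      _ ≤ _ := by linarith

noncomputable def PsiB (p : BCF m) (a b : ℝ) (hab : a ≤ b) (u : BCF m) : BCF m :=
  BoundedContinuousFunction.ofNormedAddCommGroup (PsiF νp νn p a b u)
    (psi_cont νp νn hfp hfn p a b hab u) _ (psi_bound νp νn hfp hfn p a b u)

lemma psiB_apply (p : BCF m) (a b : ℝ) (hab : a ≤ b) (u : BCF m) (t : ℝ) :
    PsiB νp νn hfp hfn p a b hab u t = PsiF νp νn p a b u t := rfl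


include hfp hfn in
lemma intOnNu_shift_of_cont {g : ℝ → Fin m → ℝ} (hg : Continuous g) {B : ℝ}
    (hB : ∀ t, ‖g t‖ ≤ B) (τ : ℝ) : IntOnNu νp νn (shift m g τ) :=
  intOnNu_of νp νn hfp hfn
    (fun j => ((continuous_apply j).comp (hg.comp (continuous_const.add continuous_id))).continuousOn)
    (fun s _ => hB (τ + s))

include hfp hfn in
lemma psi_contract {δ0 : ℝ} (hδ0 : 0 < δ0) (hρ : rhom νp νn δ0 ≤ 1/4) (p : BCF m) (a : ℝ) :
    ContractingWith (1/2) (PsiB νp νn hfp hfn p a (a + δ0) (by linarith)) := by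
  constructor
  · rw [← NNReal.coe_lt_coe]; norm_num
  · apply LipschitzWith.of_dist_le_mul
    intro u u'
    have hcoe : ((1/2 : ℝ≥0) : ℝ) = 1/2 := by norm_num
    rw [hcoe, BoundedContinuousFunction.dist_le (by positivity)]
    intro t
    set b := a + δ0 with hb
    have hab : a ≤ b := by rw [hb]; linarith
    set g1 := graftF p a b u with hg1
    set g2 := graftF p a b u' with hg2
    set d : ℝ → Fin m → ℝ := fun s => g1 s - g2 s with hd
    have hdc : Continuous d := ((graft_cont p a b hab u).sub (graft_cont p a b hab u'))
    have hdb : ∀ s, ‖d s‖ ≤ 2 * dist u u' := fun s => graft_diff_bound p a b u u' s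
    have hint1 := intOnNu_shift_of_cont νp νn hfp hfn (graft_cont p a b hab u)
      (graft_bound p a b u)
    have hint2 := intOnNu_shift_of_cont νp νn hfp hfn (graft_cont p a b hab u')
      (graft_bound p a b u')
    have hintd := intOnNu_shift_of_cont νp νn hfp hfn hdc hdb
    have hsub : ∀ τ, Lf νp νn (shift m d τ)
        = fun i => Lf νp νn (shift m g1 τ) i - Lf νp νn (shift m g2 τ) i := by
      intro τ
      exact lf_sub νp νn (hint1 τ) (hint2 τ)
    have hzero : Lf νp νn (shift m d a) = 0 := by
      apply lf_zero_of
      intro s hs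
      exact graft_diff_zero p a b u u' (by linarith : a + s ≤ a)
    rw [dist_eq_norm]
    by_cases ht : t ≤ a
    · have : PsiB νp νn hfp hfn p a b hab u t = PsiB νp νn hfp hfn p a b hab u' t := by
        rw [psiB_apply, psiB_apply]
        unfold PsiF
        rw [if_pos ht, if_pos ht]
      rw [this, sub_self, norm_zero]
      positivity
    · have e1 : PsiB νp νn hfp hfn p a b hab u t - PsiB νp νn hfp hfn p a b hab u' t
          = Lf νp νn (shift m d (min t b)) := by
      -- expand
        rw [psiB_apply, psiB_apply]
        unfold PsiF
        rw [if_neg ht, if_neg ht, hsub (min t b)]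
        funext i
        have e2 := congrFun (hsub a) i
        have e3 := congrFun hzero i
        rw [hsub a] at e3
        simp only [Pi.sub_apply, Pi.add_apply, Pi.zero_apply] at e3 ⊢
        have : Lf νp νn (shift m g1 a) i - Lf νp νn (shift m g2 a) i = 0 := e3
        ring_nf
        linarith [this]
    -- bound
      rw [e1]
      have hbnd : ‖Lf νp νn (shift m d (min t b))‖
          ≤ rhom νp νn δ0 * (2 * dist u u') + Vtot νp νn * 0 := by
        apply lf_split νp νn hfp hfn hδ0 (by positivity) le_rfl (hintd (min t b))
        · intro s _
          exact hdb _
        · intro s hs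
          have : min t b + s ≤ a := by
            have h1 : min t b ≤ b := min_le_right _ _
            have h2 : s ≤ -δ0 := hs
            rw [hb] at h1 ⊢
            linarith
          have : d (min t b + s) = 0 := graft_diff_zero p a b u u' this
          rw [show shift m d (min t b) s = d (min t b + s) from rfl, this, norm_zero]
      calc ‖Lf νp νn (shift m d (min t b))‖
          ≤ rhom νp νn δ0 * (2 * dist u u') + Vtot νp νn * 0 := hbnd
        _ ≤ (1/4) * (2 * dist u u') + 0 := by
            rw [mul_zero]
            have : rhom νp νn δ0 * (2 * dist u u') ≤ (1/4) * (2 * dist u u') :=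
              mul_le_mul_of_nonneg_right hρ (by positivity)
            linarith
        _ ≤ 1/2 * dist u u' := by
            have := dist_nonneg (x := u) (y := u'); linarith


variable (δ0 : ℝ) (hδ0 : 0 < δ0) (hρ : rhom νp νn δ0 ≤ 1/4)

noncomputable def Pstep (p : BCF m) (a : ℝ) : BCF m :=
  ContractingWith.fixedPoint
    (PsiB νp νn hfp hfn p a (a + δ0) (le_add_of_nonneg_right hδ0.le))
    (psi_contract νp νn hfp hfn hδ0 hρ p a)

lemma Pstep_fix (p : BCF m) (a : ℝ) :
    PsiB νp νn hfp hfn p a (a + δ0) (le_add_of_nonneg_right hδ0.le)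
      (Pstep νp νn hfp hfn δ0 hδ0 hρ p a) = Pstep νp νn hfp hfn δ0 hδ0 hρ p a :=
  ContractingWith.fixedPoint_isFixedPt _

noncomputable def Pseq (p0 : BCF m) : ℕ → BCF m
  | 0 => p0
  | k+1 => Pstep νp νn hfp hfn δ0 hδ0 hρ (Pseq p0 k) ((k:ℝ) * δ0)

lemma Pseq_succ_apply (p0 : BCF m) (k : ℕ) (t : ℝ) :
    Pseq νp νn hfp hfn δ0 hδ0 hρ p0 (k+1) t
      = PsiF νp νn (Pseq νp νn hfp hfn δ0 hδ0 hρ p0 k) ((k:ℝ) * δ0) ((k:ℝ) * δ0 + δ0)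
          (Pseq νp νn hfp hfn δ0 hδ0 hρ p0 (k+1)) t := by
  conv_lhs => rw [show Pseq νp νn hfp hfn δ0 hδ0 hρ p0 (k+1)
    = Pstep νp νn hfp hfn δ0 hδ0 hρ (Pseq νp νn hfp hfn δ0 hδ0 hρ p0 k) ((k:ℝ) * δ0) from rfl,
    ← Pstep_fix νp νn hfp hfn δ0 hδ0 hρ (Pseq νp νn hfp hfn δ0 hδ0 hρ p0 k) ((k:ℝ) * δ0)]
  rfl

lemma Pseq_coh_succ (p0 : BCF m) (k : ℕ) {t : ℝ} (ht : t ≤ (k:ℝ) * δ0) :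
    Pseq νp νn hfp hfn δ0 hδ0 hρ p0 (k+1) t = Pseq νp νn hfp hfn δ0 hδ0 hρ p0 k t := by
  rw [Pseq_succ_apply]
  unfold PsiF
  rw [if_pos ht]

lemma Pseq_coh (p0 : BCF m) (k l : ℕ) (hkl : k ≤ l) {t : ℝ} (ht : t ≤ (k:ℝ) * δ0) :
    Pseq νp νn hfp hfn δ0 hδ0 hρ p0 l t = Pseq νp νn hfp hfn δ0 hδ0 hρ p0 k t := by
  induction l, hkl using Nat.le_induction with
  | base => rfl
  | succ l hkl ih =>
      have hkl' : (k:ℝ) * δ0 ≤ (l:ℝ) * δ0 := by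
        apply mul_le_mul_of_nonneg_right _ hδ0.le
        exact_mod_cast hkl
      rw [Pseq_coh_succ νp νn hfp hfn δ0 hδ0 hρ p0 l (ht.trans hkl'), ih]

lemma graft_eq_self (P Q : BCF m) (a b : ℝ) (hab : a ≤ b)
    (hQP : ∀ s ≤ a, Q s = P s) : ∀ s ≤ b, graftF P a b Q s = Q s := by
  intro s hs
  unfold graftF
  split
  · next h => exact (hQP s h).symm
  · next h =>
      rw [min_eq_left hs, hQP a le_rfl]
      abel

lemma Pseq_eq (p0 : BCF m) (hp0 : p0 0 = Lf νp νn (shift m (⇑p0) 0)) :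
    ∀ k : ℕ, ∀ t : ℝ, 0 ≤ t → t ≤ (k:ℝ) * δ0 →
      Pseq νp νn hfp hfn δ0 hδ0 hρ p0 k t
        = Lf νp νn (shift m (⇑(Pseq νp νn hfp hfn δ0 hδ0 hρ p0 k)) t) := by
  intro k
  induction k with
  | zero =>
      intro t ht0 ht1
      have : t = 0 := le_antisymm (by simpa using ht1) ht0
      subst this
      exact hp0
  | succ k ih =>
      intro t ht0 ht1
      set P := Pseq νp νn hfp hfn δ0 hδ0 hρ p0 k with hP
      set Q := Pseq νp νn hfp hfn δ0 hδ0 hρ p0 (k+1) with hQ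
      set a := (k:ℝ) * δ0 with ha
      set b := (k:ℝ) * δ0 + δ0 with hb2
      have ha0 : 0 ≤ a := by positivity
      have hab : a ≤ b := by rw [ha, hb2]; linarith
      have htb : t ≤ b := by
        rw [hb2]
        have : ((k:ℕ)+1 : ℝ) * δ0 = (k:ℝ) * δ0 + δ0 := by push_cast; ring
        rw [← this]
        exact_mod_cast ht1
      have hQP : ∀ s ≤ a, Q s = P s := fun s hs =>
        Pseq_coh_succ νp νn hfp hfn δ0 hδ0 hρ p0 k hs
      by_cases hta : t ≤ a
      · have e1 : Q t = P t := hQP t hta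
        rw [e1, ih t ht0 hta]
        apply lf_congr
        intro s hs
        show shift m (⇑P) t s = shift m (⇑Q) t s
        show P (t + s) = Q (t + s)
        exact (hQP (t+s) (by simp at hs; linarith)).symm
      · have hgq : ∀ s ≤ b, graftF P a b Q s = Q s :=
          graft_eq_self P Q a b hab hQP
        have e1 : Q t = PsiF νp νn P a b Q t := Pseq_succ_apply νp νn hfp hfn δ0 hδ0 hρ p0 k t
        rw [e1]
        unfold PsiF
        rw [if_neg hta]
        have ega : Lf νp νn (shift m (graftF P a b Q) a) = P a := by
          have h1 : Lf νp νn (shift m (graftF P a b Q) a)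
              = Lf νp νn (shift m (⇑P) a) := by
            apply lf_congr
            intro s hs
            show graftF P a b Q (a + s) = P (a + s)
            have hsa : a + s ≤ a := by simp at hs; linarith
            rw [graft_eq_of_le]
            exact hsa
          rw [h1, ← ih a ha0 le_rfl]
        have egt : Lf νp νn (shift m (graftF P a b Q) (min t b))
            = Lf νp νn (shift m (⇑Q) t) := by
          rw [min_eq_left htb]
          apply lf_congr
          intro s hs
          show graftF P a b Q (t + s) = Q (t + s)
          exact hgq (t+s) (by simp at hs; linarith)
        rw [ega, egt]
        abel


noncomputable def zf (p0 : BCF m) : ℝ → Fin m → ℝ :=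
  fun t => Pseq νp νn hfp hfn δ0 hδ0 hρ p0 ⌈t/δ0⌉₊ t

lemma ceil_prop {δ0 : ℝ} (hδ0 : 0 < δ0) (t : ℝ) : t ≤ ((⌈t/δ0⌉₊ : ℝ)) * δ0 := by
  have h1 : t/δ0 ≤ (⌈t/δ0⌉₊ : ℝ) := Nat.le_ceil _
  calc t = (t/δ0) * δ0 := by field_simp
    _ ≤ ((⌈t/δ0⌉₊ : ℝ)) * δ0 := mul_le_mul_of_nonneg_right h1 hδ0.le

lemma zf_eq (p0 : BCF m) (k : ℕ) {t : ℝ} (ht : t ≤ (k:ℝ) * δ0) :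
    zf νp νn hfp hfn δ0 hδ0 hρ p0 t = Pseq νp νn hfp hfn δ0 hδ0 hρ p0 k t := by
  have hceil : t ≤ ((⌈t/δ0⌉₊ : ℝ)) * δ0 := ceil_prop hδ0 t
  unfold zf
  rcases le_total (⌈t/δ0⌉₊) k with h | h
  · exact (Pseq_coh νp νn hfp hfn δ0 hδ0 hρ p0 ⌈t/δ0⌉₊ k h hceil).symm
  · exact Pseq_coh νp νn hfp hfn δ0 hδ0 hρ p0 k ⌈t/δ0⌉₊ h ht

lemma zf_cont (p0 : BCF m) : Continuous (zf νp νn hfp hfn δ0 hδ0 hρ p0) := by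
  rw [continuous_iff_continuousAt]
  intro t0
  set k := ⌈t0/δ0⌉₊ + 1 with hk
  have ht0k : t0 < (k:ℝ) * δ0 := by
    have h1 : t0 ≤ ((⌈t0/δ0⌉₊ : ℝ)) * δ0 := ceil_prop hδ0 t0
    have h2 : ((k:ℕ) : ℝ) * δ0 = ((⌈t0/δ0⌉₊ : ℝ)) * δ0 + δ0 := by
      rw [hk]; push_cast; ring
    linarith
  have hev : zf νp νn hfp hfn δ0 hδ0 hρ p0 =ᶠ[nhds t0] ⇑(Pseq νp νn hfp hfn δ0 hδ0 hρ p0 k) :=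
    Filter.eventuallyEq_of_mem (Iio_mem_nhds ht0k)
      (fun u hu => zf_eq νp νn hfp hfn δ0 hδ0 hρ p0 k (le_of_lt hu))
  exact ((Pseq νp νn hfp hfn δ0 hδ0 hρ p0 k).continuous.continuousAt).congr hev.symm

lemma zf_neg (p0 : BCF m) {t : ℝ} (ht : t ≤ 0) : zf νp νn hfp hfn δ0 hδ0 hρ p0 t = p0 t :=
  zf_eq νp νn hfp hfn δ0 hδ0 hρ p0 0 (by simpa using ht)

lemma zf_eqn (p0 : BCF m) (hp0 : p0 0 = Lf νp νn (shift m (⇑p0) 0)) :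
    ∀ t : ℝ, 0 ≤ t → zf νp νn hfp hfn δ0 hδ0 hρ p0 t
      = Lf νp νn (shift m (zf νp νn hfp hfn δ0 hδ0 hρ p0) t) := by
  intro t ht
  set k := ⌈t/δ0⌉₊ with hk
  have hceil : t ≤ ((k:ℕ) : ℝ) * δ0 := ceil_prop hδ0 t
  have e1 : zf νp νn hfp hfn δ0 hδ0 hρ p0 t = Pseq νp νn hfp hfn δ0 hδ0 hρ p0 k t :=
    zf_eq νp νn hfp hfn δ0 hδ0 hρ p0 k hceil
  rw [e1, Pseq_eq νp νn hfp hfn δ0 hδ0 hρ p0 hp0 k t ht hceil]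
  apply lf_congr
  intro s hs
  show Pseq νp νn hfp hfn δ0 hδ0 hρ p0 k (t + s) = zf νp νn hfp hfn δ0 hδ0 hρ p0 (t + s)
  exact (zf_eq νp νn hfp hfn δ0 hδ0 hρ p0 k (by simp at hs; linarith)).symm

lemma zf_bound (p0 : BCF m) (k : ℕ) {t : ℝ} (ht : t ≤ (k:ℝ) * δ0) :
    ‖zf νp νn hfp hfn δ0 hδ0 hρ p0 t‖ ≤ ‖Pseq νp νn hfp hfn δ0 hδ0 hρ p0 k‖ := by
  rw [zf_eq νp νn hfp hfn δ0 hδ0 hρ p0 k ht]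
  exact (Pseq νp νn hfp hfn δ0 hδ0 hρ p0 k).norm_coe_le_norm t

end FP


lemma le_supNorm {x : ℝ → Fin m → ℝ} {C : ℝ} (hb : ∀ s ≤ (0:ℝ), ‖x s‖ ≤ C)
    {s : ℝ} (hs : s ≤ 0) : ‖x s‖ ≤ supNorm m x := by
  have hbdd : BddAbove (range (fun s : Iic (0:ℝ) => ‖x (s:ℝ)‖)) := by
    refine ⟨C, ?_⟩
    rintro r ⟨⟨u, hu⟩, rfl⟩
    exact hb u hu
  exact le_ciSup hbdd (⟨s, hs⟩ : Iic (0:ℝ))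

lemma supNorm_le {x : ℝ → Fin m → ℝ} {C : ℝ} (hC : ∀ s ≤ (0:ℝ), ‖x s‖ ≤ C) :
    supNorm m x ≤ C := by
  haveI : Nonempty (Iic (0:ℝ)) := ⟨⟨0, mem_Iic.2 le_rfl⟩⟩
  exact ciSup_le fun s => hC s s.2

lemma supNorm_nonneg (x : ℝ → Fin m → ℝ) : 0 ≤ supNorm m x :=
  Real.iSup_nonneg fun s => norm_nonneg _

lemma isbu_contOn {x : ℝ → Fin m → ℝ} (hx : IsBU m x) : ContinuousOn x (Iic 0) := by
  rw [Metric.continuousOn_iff]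
  intro s0 hs0 ε hε
  obtain ⟨δ, hδ, hunif⟩ := hx.2 ε hε
  refine ⟨δ, hδ, fun s hs hd => ?_⟩
  rw [dist_eq_norm]
  exact hunif s hs s0 hs0 (by rw [Real.dist_eq] at hd; exact hd)


lemma exists_delta (hfp : ∀ i j, νp i j univ ≠ ⊤) (hfn : ∀ i j, νn i j univ ≠ ⊤)
    (hzp : ∀ i j, νp i j {0} = 0) (hzn : ∀ i j, νn i j {0} = 0) :
    ∃ δ0 : ℝ, 0 < δ0 ∧ rhom νp νn δ0 ≤ 1/4 := by
  set s : ℕ → Set ℝ := fun n => Ioc (-(1/((n:ℝ)+1))) 0 with hsdef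
  have key : ∀ (μ : Measure ℝ), μ univ ≠ ⊤ → μ {0} = 0 →
      Tendsto (fun n => (μ (s n)).toReal) atTop (nhds 0) := by
    intro μ hμ hz
    have hmeas : ∀ n, NullMeasurableSet (s n) μ := fun n => measurableSet_Ioc.nullMeasurableSet
    have hanti : Antitone s := by
      intro n1 n2 h12
      apply Ioc_subset_Ioc_left
      have h0 : (0:ℝ) < (n1:ℝ) + 1 := by positivity
      have h2 : ((n1:ℝ)+1) ≤ ((n2:ℝ)+1) := by
        have : (n1:ℝ) ≤ (n2:ℝ) := Nat.cast_le.2 h12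
        linarith
      have := one_div_le_one_div_of_le h0 h2
      linarith
    have hfin : ∃ n, μ (s n) ≠ ⊤ :=
      ⟨0, ne_top_of_le_ne_top hμ (measure_mono (subset_univ _))⟩
    have hint : (⋂ n, s n) = {0} := by
      ext x
      simp only [mem_iInter, mem_Ioc, mem_singleton_iff, hsdef]
      constructor
      · intro hx
        by_contra hne
        have hx0 : x ≤ 0 := (hx 0).2
        have hxlt : x < 0 := lt_of_le_of_ne hx0 hne
        obtain ⟨n, hn⟩ := exists_nat_one_div_lt (show (0:ℝ) < -x by linarith)
        have := (hx n).1
        linarith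
      · rintro rfl
        intro n
        constructor
        · have : (0:ℝ) < 1/((n:ℝ)+1) := by positivity
          linarith
        · exact le_rfl
    have h1 : Tendsto (fun n => μ (s n)) atTop (nhds (μ (⋂ n, s n))) :=
      tendsto_measure_iInter_atTop hmeas hanti hfin
    rw [hint, hz] at h1
    have h2 := (ENNReal.tendsto_toReal (by simp : (0:ENNReal) ≠ ⊤)).comp h1
    simpa [Function.comp_def] using h2
  have hsum : Tendsto (fun n : ℕ => rhom νp νn (1/((n:ℝ)+1))) atTop (nhds 0) := by
    have : Tendsto (fun n => ∑ i : Fin m, ∑ j : Fin m,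
        ((νp i j (s n)).toReal + (νn i j (s n)).toReal)) atTop
        (nhds (∑ i : Fin m, ∑ j : Fin m, ((0:ℝ) + 0))) := by
      apply tendsto_finset_sum
      intro i _
      apply tendsto_finset_sum
      intro j _
      exact (key _ (hfp i j) (hzp i j)).add (key _ (hfn i j) (hzn i j))
    have h3 : ∀ n : ℕ, (∑ i : Fin m, ∑ j : Fin m,
        ((νp i j (s n)).toReal + (νn i j (s n)).toReal)) = rhom νp νn (1/((n:ℝ)+1)) :=
      fun n => rfl
    rw [Filter.tendsto_congr h3] at this
    simpa using this
  obtain ⟨n, hn⟩ := (hsum.eventually_lt_const (by norm_num : (0:ℝ) < 1/4)).exists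
  exact ⟨1/((n:ℝ)+1), by positivity, le_of_lt hn⟩

lemma exists_inv (hinj : ∀ v : Fin m → ℝ, Dop m νp νn (fun _ => v) = 0 → v = 0) :
    ∃ C0 : ℝ, 0 < C0 ∧ ∀ w : Fin m → ℝ, ∃ v : Fin m → ℝ,
      Dop m νp νn (fun _ => v) = w ∧ ‖v‖ ≤ C0 * ‖w‖ := by
  set E : (Fin m → ℝ) →ₗ[ℝ] (Fin m → ℝ) :=
    LinearMap.id - Matrix.mulVecLin
      (Matrix.of fun i j => ((νp i j (Iic 0)).toReal - (νn i j (Iic 0)).toReal)) with hE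
  have hEv : ∀ v : Fin m → ℝ, E v = Dop m νp νn (fun _ => v) := by
    intro v
    funext i
    show v i - _ = _
    unfold Dop
    simp only [Matrix.mulVecLin_apply, Matrix.mulVec, dotProduct, Matrix.of_apply,
      MeasureTheory.setIntegral_const, smul_eq_mul, Measure.real]
    congr 1
    apply Finset.sum_congr rfl
    intro j _
    ring
  have hE_inj : Function.Injective E := by
    intro v1 v2 h
    have h0 : E (v1 - v2) = 0 := by rw [map_sub, h, sub_self]
    have := hinj (v1 - v2) (by rw [← hEv]; exact h0)
    exact sub_eq_zero.mp this
  have hE_surj : Function.Surjective E := LinearMap.injective_iff_surjective.1 hE_inj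
  set e := LinearEquiv.ofBijective E ⟨hE_inj, hE_surj⟩ with he
  set f := LinearMap.toContinuousLinearMap (e.symm.toLinearMap) with hf
  refine ⟨‖f‖ + 1, by positivity, fun w => ?_⟩
  refine ⟨e.symm w, ?_, ?_⟩
  · rw [← hEv]
    exact e.apply_symm_apply w
  · have h1 : e.symm w = f w := rfl
    rw [h1]
    calc ‖f w‖ ≤ ‖f‖ * ‖w‖ := f.le_opNorm w
      _ ≤ (‖f‖ + 1) * ‖w‖ := by
          apply mul_le_mul_of_nonneg_right _ (norm_nonneg _)
          linarith

end St5

set_option maxHeartbeats 3200000 in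
/-- If `D` is stable, there is `k > 0` such that
`‖x^h‖_∞ ≤ k ‖h‖_∞` for all `h ∈ BU` and `x^h ∈ BU` with `D x^h_s = h(s)`
for every `s ≤ 0`. -/
theorem statement5 (m : ℕ) (νp νn : Fin m → Fin m → Measure ℝ)
    (hν : NuCond m νp νn) (hst : IsStableOp m (Dop m νp νn)) :
    ∃ k : ℝ, 0 < k ∧
      ∀ h xh : ℝ → Fin m → ℝ, IsBU m h → IsBU m xh →
        (∀ s : ℝ, s ≤ 0 → Dop m νp νn (shift m xh s) = h s) →
        supNorm m xh ≤ k * supNorm m h := by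
  obtain ⟨hfp, hfn, hzp, hzn⟩ := hν
  obtain ⟨c, hc_cont, hc_nn, hc_tend, hc_stab⟩ := hst
  -- injectivity of I - M via stability
  have hinj : ∀ v : Fin m → ℝ, Dop m νp νn (fun _ => v) = 0 → v = 0 := by
    intro v hv
    have hBU : IsBU m (fun _ : ℝ => v) := by
      refine ⟨⟨‖v‖, fun s _ => le_rfl⟩, fun ε hε => ⟨1, one_pos, fun s _ s' _ _ => ?_⟩⟩
      simpa using hε
    have hDs : ∀ t : ℝ, 0 ≤ t → Dop m νp νn (shift m (fun _ => v) t) = 0 := fun t _ => hv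
    have hb := hc_stab (fun _ => v) continuous_const hBU hDs
    have hsup : supNorm m (fun _ : ℝ => v) = ‖v‖ := by
      haveI : Nonempty (Iic (0:ℝ)) := ⟨⟨0, mem_Iic.2 le_rfl⟩⟩
      exact ciSup_const
    obtain ⟨t0, ht0, hct0⟩ : ∃ t0 : ℝ, 0 ≤ t0 ∧ c t0 < 1/2 := by
      have h2 := (hc_tend.eventually_lt_const (by norm_num : (0:ℝ) < 1/2)).and
        (eventually_ge_atTop (0:ℝ))
      obtain ⟨t0, h3, h4⟩ := h2.exists
      exact ⟨t0, h4, h3⟩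
    have hb0 := hb t0 ht0
    rw [hsup] at hb0
    by_contra hne
    have hpos : 0 < ‖v‖ := norm_pos_iff.mpr hne
    nlinarith [hb0, hct0, hpos]
  obtain ⟨C0, hC0, hsurj⟩ := St5.exists_inv νp νn hinj
  obtain ⟨δ0, hδ0, hρ⟩ := St5.exists_delta νp νn hfp hfn hzp hzn
  obtain ⟨T, hT0, hcT⟩ : ∃ T : ℝ, 0 ≤ T ∧ c T ≤ 1/4 := by
    have h2 := (hc_tend.eventually_lt_const (by norm_num : (0:ℝ) < 1/4)).and
      (eventually_ge_atTop (0:ℝ))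
    obtain ⟨T, h3, h4⟩ := h2.exists
    exact ⟨T, h4, h3.le⟩
  set N := ⌈T/δ0⌉₊ with hN
  have hTN : T ≤ (N:ℝ) * δ0 := St5.ceil_prop hδ0 T
  set V := St5.Vtot νp νn with hV
  have hV0 : 0 ≤ V := St5.Vtot_nonneg νp νn
  set K := (2*V+4)^N * (C0 + 2) with hK
  have hK0 : 0 ≤ K := mul_nonneg (pow_nonneg (by linarith) N) (by linarith)
  refine ⟨(4/3) * (K + C0/4) + 1, by nlinarith, ?_⟩
  intro h xh hBUh hBUxh hdx
  obtain ⟨Ch, hCh⟩ := hBUh.1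
  obtain ⟨Cx, hCx⟩ := hBUxh.1
  set S := supNorm m xh with hS
  set H := supNorm m h with hH
  have hH0 : 0 ≤ H := St5.supNorm_nonneg _
  have hS0 : 0 ≤ S := St5.supNorm_nonneg _
  have hxle : ∀ s ≤ (0:ℝ), ‖xh s‖ ≤ S := fun s hs => St5.le_supNorm hCx hs
  have hhle : ∀ s ≤ (0:ℝ), ‖h s‖ ≤ H := fun s hs => St5.le_supNorm hCh hs
  have hxcon : ContinuousOn xh (Iic 0) := St5.isbu_contOn hBUxh
  -- key pointwise claim
  have key : ∀ s0 ≤ (0:ℝ), ‖xh s0‖ ≤ (1/4) * S + (K + C0/4) * H := by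
    intro s0 hs0
    set σ := s0 - T with hσ
    have hσ0 : σ ≤ 0 := by rw [hσ]; linarith
    obtain ⟨v, hv_eq, hv_le⟩ := hsurj (h σ)
    have hvH : ‖v‖ ≤ C0 * H :=
      hv_le.trans (mul_le_mul_of_nonneg_left (hhle σ hσ0) hC0.le)
    have hv0 : 0 ≤ ‖v‖ := norm_nonneg v
    -- initial history p0
    have hmap : ∀ t : ℝ, σ + min t 0 ∈ Iic (0:ℝ) := by
      intro t
      have : min t 0 ≤ 0 := min_le_right _ _
      simp only [mem_Iic]
      linarith
    have hp0cont : Continuous (fun t : ℝ => xh (σ + min t 0) - v) := by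
      have h1 : Continuous (fun t : ℝ => σ + min t 0) :=
        continuous_const.add (continuous_id.min continuous_const)
      have h2 := hxcon.comp_continuous h1 hmap
      exact h2.sub continuous_const
    have hp0bd : ∀ t : ℝ, ‖xh (σ + min t 0) - v‖ ≤ Cx + ‖v‖ := by
      intro t
      calc ‖xh (σ + min t 0) - v‖ ≤ ‖xh (σ + min t 0)‖ + ‖v‖ := norm_sub_le _ _
        _ ≤ Cx + ‖v‖ := by
            have := hCx (σ + min t 0) (hmap t)
            linarith
    set p0 : St5.BCF m := BoundedContinuousFunction.ofNormedAddCommGroup _ hp0cont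
      (Cx + ‖v‖) hp0bd with hp0def
    have hp0_apply : ∀ t, p0 t = xh (σ + min t 0) - v := by
      intro t
      rw [hp0def, BoundedContinuousFunction.coe_ofNormedAddCommGroup]
    have hp0_neg : ∀ s ≤ (0:ℝ), p0 s = xh (σ + s) - v := by
      intro s hs
      rw [hp0_apply, min_eq_left hs]
    -- integrability helpers
    have hint_xh : ∀ τ ≤ (0:ℝ), St5.IntOnNu νp νn (shift m xh τ) := by
      intro τ hτ
      refine St5.intOnNu_of νp νn hfp hfn (fun j => ?_) (fun s hs => hCx (τ + s) (by linarith))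
      refine (continuous_apply j).comp_continuousOn ?_
      refine hxcon.comp ((continuous_const.add continuous_id).continuousOn) ?_
      intro s hs
      simp only [mem_Iic] at hs ⊢
      linarith
    have hint_const : St5.IntOnNu νp νn (fun _ : ℝ => v) :=
      St5.intOnNu_of νp νn hfp hfn (fun j => continuous_const.continuousOn)
        (fun s _ => le_rfl)
    -- invariant for p0
    have hp0inv : p0 0 = St5.Lf νp νn (shift m (⇑p0) 0) := by
      have hshift : EqOn (shift m (⇑p0) 0)
          (fun s => shift m xh σ s - (fun _ : ℝ => v) s) (Iic 0) := by
        intro s hs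
        simp only [mem_Iic] at hs
        show p0 (0 + s) = xh (σ + s) - v
        rw [zero_add, hp0_neg s hs]
      rw [St5.lf_congr νp νn hshift, St5.lf_sub νp νn (hint_xh σ hσ0) hint_const]
      funext i
      have hdxσ := hdx σ hσ0
      rw [St5.Dop_eq] at hdxσ
      have h1 : xh (σ + 0) i - St5.Lf νp νn (shift m xh σ) i = h σ i := congrFun hdxσ i
      rw [add_zero] at h1
      have hveq := hv_eq
      rw [St5.Dop_eq] at hveq
      have h2 : v i - St5.Lf νp νn (fun _ : ℝ => v) i = h σ i := congrFun hveq i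
      have h3 : p0 0 i = xh σ i - v i := by
        rw [hp0_neg 0 le_rfl, add_zero]
        rfl
      rw [h3]
      show xh σ i - v i = St5.Lf νp νn (shift m xh σ) i - St5.Lf νp νn (fun _ : ℝ => v) i
      linarith
    -- the homogeneous solution z
    set z := St5.zf νp νn hfp hfn δ0 hδ0 hρ p0 with hz
    have hzcont : Continuous z := St5.zf_cont νp νn hfp hfn δ0 hδ0 hρ p0
    have hz_negp : ∀ s ≤ (0:ℝ), z s = p0 s := by
      intro s hs
      rw [hz]
      exact St5.zf_neg νp νn hfp hfn δ0 hδ0 hρ p0 hs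
    have hz_neg : ∀ s ≤ (0:ℝ), z s = xh (σ + s) - v := by
      intro s hs
      rw [hz_negp s hs, hp0_neg s hs]
    have hz_eqn : ∀ t : ℝ, 0 ≤ t → z t = St5.Lf νp νn (shift m z t) := by
      intro t ht
      rw [hz]
      exact St5.zf_eqn νp νn hfp hfn δ0 hδ0 hρ p0 hp0inv t ht
    have hzBU : IsBU m z := by
      constructor
      · refine ⟨‖p0‖, fun s hs => ?_⟩
        rw [hz_negp s hs]
        exact p0.norm_coe_le_norm s
      · intro ε hε
        obtain ⟨δ, hδpos, hu⟩ := hBUxh.2 ε hε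
        refine ⟨δ, hδpos, fun s hs s' hs' hss => ?_⟩
        have e : z s - z s' = xh (σ + s) - xh (σ + s') := by
          rw [hz_neg s hs, hz_neg s' hs']
          abel
        rw [e]
        exact hu (σ + s) (by linarith) (σ + s') (by linarith)
          (by rw [show σ + s - (σ + s') = s - s' by ring]; exact hss)
    have hzD : ∀ t : ℝ, 0 ≤ t → Dop m νp νn (shift m z t) = 0 := by
      intro t ht
      rw [St5.Dop_eq]
      funext i
      have e : z (t + 0) = St5.Lf νp νn (shift m z t) := by
        rw [add_zero]
        exact hz_eqn t ht
      show z (t + 0) i - St5.Lf νp νn (shift m z t) i = 0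
      rw [e]
      exact sub_self _
    have hstabz := hc_stab z hzcont hzBU hzD T hT0
    have hsupz : supNorm m z ≤ S + C0 * H := by
      apply St5.supNorm_le
      intro s hs
      rw [hz_neg s hs]
      calc ‖xh (σ + s) - v‖ ≤ ‖xh (σ + s)‖ + ‖v‖ := norm_sub_le _ _
        _ ≤ S + C0 * H := add_le_add (hxle _ (by linarith)) hvH
    have hzT : ‖z T‖ ≤ (1/4) * (S + C0 * H) := by
      calc ‖z T‖ ≤ c T * supNorm m z := hstabz
        _ ≤ (1/4) * (S + C0 * H) :=
            mul_le_mul hcT hsupz (St5.supNorm_nonneg _) (by norm_num)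
    -- the difference w
    set w : ℝ → Fin m → ℝ := fun t => xh (σ + t) - z t with hw
    have hw_neg : ∀ s ≤ (0:ℝ), w s = v := by
      intro s hs
      rw [hw]
      show xh (σ + s) - z s = v
      rw [hz_neg s hs]
      exact sub_sub_cancel _ _
    set BW := Cx + ‖St5.Pseq νp νn hfp hfn δ0 hδ0 hρ p0 N‖ with hBW
    have hwbound : ∀ t ≤ T, ‖w t‖ ≤ BW := by
      intro t ht
      rw [hw]
      show ‖xh (σ + t) - z t‖ ≤ BW
      have h1 : ‖xh (σ + t)‖ ≤ Cx := hCx _ (by linarith)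
      have h2 : ‖z t‖ ≤ ‖St5.Pseq νp νn hfp hfn δ0 hδ0 hρ p0 N‖ := by
        rw [hz]
        exact St5.zf_bound νp νn hfp hfn δ0 hδ0 hρ p0 N (le_trans ht hTN)
      calc ‖xh (σ + t) - z t‖ ≤ ‖xh (σ + t)‖ + ‖z t‖ := norm_sub_le _ _
        _ ≤ BW := by rw [hBW]; linarith
    -- the truncated sups
    set Sk : ℕ → ℝ := fun k => ⨆ t : Iic (min ((k:ℝ) * δ0) T), ‖w (t:ℝ)‖ with hSkdef
    have hSk_le : ∀ (k : ℕ) (C : ℝ), (∀ t ≤ min ((k:ℝ) * δ0) T, ‖w t‖ ≤ C) → Sk k ≤ C := by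
      intro k C hC
      haveI : Nonempty (Iic (min ((k:ℝ) * δ0) T)) := ⟨⟨min ((k:ℝ) * δ0) T, mem_Iic.2 le_rfl⟩⟩
      exact ciSup_le fun t => hC t t.2
    have hle_Sk : ∀ (k : ℕ) (t : ℝ), t ≤ min ((k:ℝ) * δ0) T → ‖w t‖ ≤ Sk k := by
      intro k t ht
      have hbdd : BddAbove (range (fun t : Iic (min ((k:ℝ) * δ0) T) => ‖w (t:ℝ)‖)) := by
        refine ⟨BW, ?_⟩
        rintro r ⟨⟨u, hu⟩, rfl⟩
        exact hwbound u (le_trans hu (min_le_right _ _))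
      exact le_ciSup hbdd (⟨t, ht⟩ : Iic (min ((k:ℝ) * δ0) T))
    have hSk0 : ∀ k, 0 ≤ Sk k := fun k => Real.iSup_nonneg fun t => norm_nonneg _
    -- integrability of shifted w
    have hint_w : ∀ t, 0 ≤ t → t ≤ T → St5.IntOnNu νp νn (shift m w t) := by
      intro t ht0 htT
      refine St5.intOnNu_of νp νn hfp hfn (fun j => ?_) (fun s hs => hwbound (t + s) (by linarith))
      have hX : ContinuousOn (fun s => xh (σ + (t + s))) (Iic 0) := by
        refine hxcon.comp ((continuous_const.add (continuous_const.add continuous_id)).continuousOn) ?_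
        intro s hs
        simp only [mem_Iic] at hs ⊢
        linarith
      have hY : ContinuousOn (fun s : ℝ => z (t + s)) (Iic 0) :=
        (hzcont.comp (continuous_const.add continuous_id)).continuousOn
      have : ContinuousOn (fun s => shift m w t s) (Iic 0) := hX.sub hY
      exact (continuous_apply j).comp_continuousOn this
    have hint_z : ∀ t : ℝ, 0 ≤ t → St5.IntOnNu νp νn (shift m z t) := by
      intro t ht0
      refine St5.intOnNu_of νp νn hfp hfn (fun j => ?_)
        (fun s hs => (?_ : ‖z (t+s)‖ ≤ ‖St5.Pseq νp νn hfp hfn δ0 hδ0 hρ p0 ⌈t/δ0⌉₊‖))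
      · exact (continuous_apply j).comp_continuousOn
          ((hzcont.comp (continuous_const.add continuous_id)).continuousOn)
      · rw [hz]
        refine St5.zf_bound νp νn hfp hfn δ0 hδ0 hρ p0 ⌈t/δ0⌉₊ ?_
        have := St5.ceil_prop hδ0 t
        linarith
    have hint_x2 : ∀ t, 0 ≤ t → t ≤ T → St5.IntOnNu νp νn (shift m (fun u => xh (σ + u)) t) := by
      intro t ht0 htT
      refine St5.intOnNu_of νp νn hfp hfn (fun j => ?_)
        (fun s hs => (?_ : ‖xh (σ + (t + s))‖ ≤ Cx))
      · refine (continuous_apply j).comp_continuousOn ?_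
        refine hxcon.comp ((continuous_const.add (continuous_const.add continuous_id)).continuousOn) ?_
        intro s hs
        simp only [mem_Iic] at hs ⊢
        linarith
      · exact hCx _ (by linarith)
    -- the equation for w
    have hw_eqn : ∀ t, 0 ≤ t → t ≤ T → ∀ i,
        w t i = St5.Lf νp νn (shift m w t) i + h (σ + t) i := by
      intro t ht0 htT i
      have hσt : σ + t ≤ 0 := by linarith
      have hdxt := hdx (σ + t) hσt
      rw [St5.Dop_eq] at hdxt
      have h1 : xh ((σ + t) + 0) i - St5.Lf νp νn (shift m xh (σ + t)) i = h (σ + t) i :=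
        congrFun hdxt i
      rw [add_zero] at h1
      have h2 : z t i = St5.Lf νp νn (shift m z t) i := congrFun (hz_eqn t ht0) i
      have hsplit : St5.Lf νp νn (shift m w t)
          = fun i => St5.Lf νp νn (shift m (fun u => xh (σ + u)) t) i
            - St5.Lf νp νn (shift m z t) i := by
        have e : shift m w t = fun s => shift m (fun u => xh (σ + u)) t s - shift m z t s := rfl
        rw [e]
        exact St5.lf_sub νp νn (hint_x2 t ht0 htT) (hint_z t ht0)
      have hcongr : St5.Lf νp νn (shift m (fun u => xh (σ + u)) t)
          = St5.Lf νp νn (shift m xh (σ + t)) := by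
        apply St5.lf_congr
        intro s hs
        show xh (σ + (t + s)) = xh ((σ + t) + s)
        rw [add_assoc]
      have h3 : w t i = xh (σ + t) i - z t i := by rw [hw]; rfl
      have h4 := congrFun hsplit i
      have h5 := congrFun hcongr i
      rw [h3, h4]
      simp only [h5]
      linarith
    -- recursion
    have hrec : ∀ k : ℕ, Sk (k+1) ≤ 2*(V+1) * Sk k + 2*H := by
      intro k
      have hmain : Sk (k+1) ≤ (1/4) * Sk (k+1) + (V+1) * Sk k + H := by
        apply hSk_le
        intro t ht
        have hcast : (((k:ℕ)+1 : ℕ) : ℝ) * δ0 = (k:ℝ) * δ0 + δ0 := by push_cast; ring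
        have htT : t ≤ T := le_trans ht (min_le_right _ _)
        have htk1 : t ≤ (k:ℝ) * δ0 + δ0 := by
          rw [← hcast]
          exact le_trans ht (min_le_left _ _)
        by_cases ht0 : t ≤ 0
        · have h1 : ‖w t‖ ≤ Sk k := by
            apply hle_Sk k t
            apply le_min _ htT
            have : (0:ℝ) ≤ (k:ℝ) * δ0 := by positivity
            linarith
          nlinarith [hSk0 (k+1), hSk0 k, hH0, hV0]
        · push_neg at ht0
          have heq := hw_eqn t ht0.le htT
          have hLfb : ‖St5.Lf νp νn (shift m w t)‖
              ≤ St5.rhom νp νn δ0 * Sk (k+1) + V * Sk k := by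
            apply St5.lf_split νp νn hfp hfn hδ0 (hSk0 (k+1)) (hSk0 k) (hint_w t ht0.le htT)
            · intro s hs
              obtain ⟨hs1, hs2⟩ := hs
              show ‖w (t + s)‖ ≤ Sk (k+1)
              apply hle_Sk (k+1) (t+s)
              apply le_min _ (by linarith)
              rw [hcast]
              linarith
            · intro s hs
              simp only [mem_Iic] at hs
              show ‖w (t + s)‖ ≤ Sk k
              apply hle_Sk k (t+s)
              exact le_min (by linarith) (by linarith)
          have hwtb : ‖w t‖ ≤ ‖St5.Lf νp νn (shift m w t)‖ + H := by
            have hhb : ‖h (σ + t)‖ ≤ H := hhle _ (by linarith)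
            have hnn : (0:ℝ) ≤ ‖St5.Lf νp νn (shift m w t)‖ + H := by positivity
            rw [pi_norm_le_iff_of_nonneg hnn]
            intro i
            rw [heq i]
            calc ‖St5.Lf νp νn (shift m w t) i + h (σ + t) i‖
                ≤ ‖St5.Lf νp νn (shift m w t) i‖ + ‖h (σ + t) i‖ := norm_add_le _ _
              _ ≤ ‖St5.Lf νp νn (shift m w t)‖ + H := by
                  have e1 := norm_le_pi_norm (St5.Lf νp νn (shift m w t)) i
                  have e2 := norm_le_pi_norm (h (σ + t)) i
                  have := hhle (σ + t) (by linarith)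
                  linarith
          have hρ4 : St5.rhom νp νn δ0 * Sk (k+1) ≤ (1/4) * Sk (k+1) :=
            mul_le_mul_of_nonneg_right hρ (hSk0 (k+1))
          have : V * Sk k ≤ (V+1) * Sk k := by nlinarith [hSk0 k]
          linarith
      nlinarith [hSk0 k, hSk0 (k+1), hH0, hV0]
    have hSbound : ∀ k : ℕ, Sk k ≤ (2*V+4)^k * (C0 * H + 2*H) := by
      intro k
      induction k with
      | zero =>
          simp only [pow_zero, one_mul]
          apply hSk_le
          intro t ht
          have ht0 : t ≤ 0 := by
            have := le_trans ht (min_le_left _ _)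
            simpa using this
          rw [hw_neg t ht0]
          nlinarith
      | succ k ih =>
          have hB1 : (1:ℝ) ≤ 2*V+4 := by linarith
          have hBk : (1:ℝ) ≤ (2*V+4)^k := one_le_pow₀ hB1
          have hM0 : 0 ≤ C0 * H + 2*H := by positivity
          have := hrec k
          rw [pow_succ]
          nlinarith [hSk0 k, ih]
    -- conclude
    have hwT : ‖w T‖ ≤ K * H := by
      have h1 : ‖w T‖ ≤ Sk N := hle_Sk N T (le_min hTN le_rfl)
      have h2 := hSbound N
      calc ‖w T‖ ≤ (2*V+4)^N * (C0 * H + 2*H) := le_trans h1 h2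
        _ = K * H := by rw [hK]; ring
    have hdecomp : xh s0 = w T + z T := by
      rw [hw]
      show xh s0 = (xh (σ + T) - z T) + z T
      rw [sub_add_cancel, hσ]
      congr 1
      ring
    calc ‖xh s0‖ = ‖w T + z T‖ := by rw [hdecomp]
      _ ≤ ‖w T‖ + ‖z T‖ := norm_add_le _ _
      _ ≤ K * H + (1/4) * (S + C0 * H) := add_le_add hwT hzT
      _ = (1/4) * S + (K + C0/4) * H := by ring
  have hfinal : S ≤ (1/4) * S + (K + C0/4) * H := St5.supNorm_le (fun s hs => key s hs)
  nlinarith [hfinal, hH0, hK0, hC0, hS0]
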